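/- The sequence k ↦ [x^k] 1/(2 − e^x) of power series coefficients is nondecreasing in k ≥ 0. -/

import Mathlib

open PowerSeries Finset Nat

private noncomputable def aSeq (n : ℕ) : ℝ := PowerSeries.coeff n (2 - PowerSeries.exp ℝ)⁻¹

private lemma constCoeff_aux : constantCoeff (2 - PowerSeries.exp ℝ) = 1 := by
  rw [map_sub, map_ofNat, PowerSeries.constantCoeff_exp]
  norm_num

private lemma coeff_aux (i : ℕ) (hi : i ≠ 0) :
    PowerSeries.coeff i (2 - PowerSeries.exp ℝ) = -(1 / (i ! : ℝ)) := by
  rw [map_sub, PowerSeries.coeff_exp]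
  have : (PowerSeries.coeff i) (2 : ℝ⟦X⟧) = 0 := by
    have : (2 : ℝ⟦X⟧) = (PowerSeries.C (R := ℝ)) 2 := (map_ofNat (PowerSeries.C (R := ℝ)) 2).symm
    rw [this, PowerSeries.coeff_C, if_neg hi]
  rw [this]
  push_cast
  simp

private lemma aSeq_rec (n : ℕ) (hn : n ≠ 0) :
    aSeq n = ∑ j ∈ range n, aSeq j / ((n - j)! : ℝ) := by
  simp only [aSeq]
  rw [PowerSeries.coeff_inv, if_neg hn, constCoeff_aux]
  rw [Finset.Nat.sum_antidiagonal_eq_sum_range_succ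
    (fun i j => if j < n then (PowerSeries.coeff i) (2 - PowerSeries.exp ℝ) *
      PowerSeries.coeff j (2 - PowerSeries.exp ℝ)⁻¹ else 0) n]
  rw [Finset.sum_range_succ']
  simp only [Nat.sub_zero, lt_irrefl, if_false, add_zero, inv_one, neg_mul, one_mul]
  rw [← Finset.sum_range_reflect (fun j => (PowerSeries.coeff j) (2 - PowerSeries.exp ℝ)⁻¹ / ((n - j)! : ℝ)) n]
  rw [← Finset.sum_neg_distrib]
  apply Finset.sum_congr rfl
  intro x hx
  rw [Finset.mem_range] at hx
  have hc : n - (x + 1) < n := by omega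
  rw [if_pos hc, coeff_aux (x + 1) (by omega)]
  have h1 : n - (x + 1) = n - 1 - x := by omega
  have h2 : n - (n - 1 - x) = x + 1 := by omega
  rw [h1, h2]
  field_simp

private lemma aSeq_pos : ∀ n, 0 < aSeq n := by
  intro n
  induction n using Nat.strong_induction_on with
  | _ n ih =>
    rcases Nat.eq_zero_or_pos n with h | h
    · subst h
      have : aSeq 0 = 1 := by
        rw [aSeq, PowerSeries.coeff_zero_eq_constantCoeff_apply, PowerSeries.constantCoeff_inv,
          constCoeff_aux]
        norm_num
      rw [this]; norm_num
    · rw [aSeq_rec n (by omega)]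
      apply Finset.sum_pos
      · intro j hj
        rw [Finset.mem_range] at hj
        exact div_pos (ih j hj) (by exact_mod_cast Nat.factorial_pos _)
      · exact ⟨0, Finset.mem_range.mpr h⟩

/-- `k ↦ [x^k] 1/(2 − e^x)` is nondecreasing. -/
theorem cusick_stmt16 :
    Monotone (fun k : ℕ => PowerSeries.coeff k (2 - PowerSeries.exp ℝ)⁻¹) := by
  have : Monotone aSeq := by
    apply monotone_nat_of_le_succ
    intro n
    rw [aSeq_rec (n + 1) (by omega), Finset.sum_range_succ]
    have h1 : aSeq n / ((n + 1 - n)! : ℝ) = aSeq n := by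
      simp
    rw [h1]
    have : (0 : ℝ) ≤ ∑ j ∈ range n, aSeq j / ((n + 1 - j)! : ℝ) := by
      apply Finset.sum_nonneg
      intro j _
      exact le_of_lt (div_pos (aSeq_pos j) (by exact_mod_cast Nat.factorial_pos _))
    linarith
  exact this
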